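/- arXiv:1204.6279 — 3 statements merged into one kernel-verified Lean document; each statement's English description precedes it below -/
import Mathlib

section
/- There exists a unique function f : [0, +∞) → ℝ such that f(0) = 1 and f(u·tanh u) = (tanh u)/u for every u > 0; moreover 0 < f(t) ≤ 1 for every t ≥ 0. -/
private lemma tanh_pos' {u : ℝ} (hu : 0 < u) : 0 < Real.tanh u := by
  rw [Real.tanh_eq_sinh_div_cosh]
  exact div_pos (Real.sinh_pos_iff.2 hu) (Real.cosh_pos u)

private lemma tanh_strictMono' : StrictMono Real.tanh := by
  intro a b hab
  have h : Real.tanh b - Real.tanh a = Real.sinh (b - a) / (Real.cosh a * Real.cosh b) := by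
    rw [Real.tanh_eq_sinh_div_cosh, Real.tanh_eq_sinh_div_cosh, Real.sinh_sub,
      div_sub_div _ _ (Real.cosh_pos b).ne' (Real.cosh_pos a).ne']
    ring_nf
  have : 0 < Real.tanh b - Real.tanh a := by
    rw [h]
    exact div_pos (Real.sinh_pos_iff.2 (by linarith)) (by positivity)
  linarith

private lemma continuous_tanh' : Continuous Real.tanh := by
  have : Real.tanh = fun x => Real.sinh x / Real.cosh x := by
    funext x; exact Real.tanh_eq_sinh_div_cosh x
  rw [this]
  exact Real.continuous_sinh.div Real.continuous_cosh (fun x => (Real.cosh_pos x).ne')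

private lemma sinh_le_mul_cosh {u : ℝ} (hu : 0 ≤ u) : Real.sinh u ≤ u * Real.cosh u := by
  have hmono : MonotoneOn (fun x => x * Real.cosh x - Real.sinh x) (Set.Ici (0:ℝ)) := by
    apply monotoneOn_of_deriv_nonneg (convex_Ici 0)
    · exact ((continuous_id.mul Real.continuous_cosh).sub Real.continuous_sinh).continuousOn
    · intro x _
      exact (((hasDerivAt_id x).mul (Real.hasDerivAt_cosh x)).sub
        (Real.hasDerivAt_sinh x)).differentiableAt.differentiableWithinAt
    · intro x hx
      rw [interior_Ici] at hx
      have hD : HasDerivAt (fun y => y * Real.cosh y - Real.sinh y) (x * Real.sinh x) x := by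
        have h := ((hasDerivAt_id x).mul (Real.hasDerivAt_cosh x)).sub (Real.hasDerivAt_sinh x)
        exact h.congr_deriv (by simp [id])
      rw [hD.deriv]
      exact mul_nonneg (le_of_lt hx) (Real.sinh_pos_iff.2 hx).le
  have := hmono (Set.self_mem_Ici) (Set.mem_Ici.2 hu) hu
  simp only [zero_mul, Real.sinh_zero, sub_zero, zero_sub, Real.cosh_zero, mul_zero] at this
  linarith

private lemma phi_strictMonoOn : StrictMonoOn (fun u => u * Real.tanh u) (Set.Ici (0:ℝ)) := by
  intro a ha b hb hab
  simp only
  rcases eq_or_lt_of_le (Set.mem_Ici.1 ha) with h | h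
  · rw [← h]
    simp only [zero_mul]
    have hb' : 0 < b := lt_of_le_of_lt (by rw [h]) hab
    exact mul_pos hb' (tanh_pos' hb')
  · have h1 : Real.tanh a < Real.tanh b := tanh_strictMono' hab
    have h2 : 0 < Real.tanh a := tanh_pos' h
    nlinarith

private lemma phi_surj {t : ℝ} (ht : 0 < t) : ∃ u : ℝ, 0 < u ∧ u * Real.tanh u = t := by
  set M := max 1 (t / Real.tanh 1) with hM
  have h1 : (0:ℝ) < Real.tanh 1 := tanh_pos' one_pos
  have hM1 : 1 ≤ M := le_max_left _ _
  have ht1 : Real.tanh 1 ≤ Real.tanh M := tanh_strictMono'.monotone hM1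
  have hMt : t ≤ M * Real.tanh M := by
    calc t = (t / Real.tanh 1) * Real.tanh 1 := by field_simp
    _ ≤ M * Real.tanh M := by
        apply mul_le_mul (le_max_right _ _) ht1 h1.le (by linarith)
  have hcont : ContinuousOn (fun u => u * Real.tanh u) (Set.Icc 0 M) :=
    (continuous_id.mul continuous_tanh').continuousOn
  have := intermediate_value_Icc (by linarith : (0:ℝ) ≤ M) hcont
  have hmem : t ∈ Set.Icc ((fun u => u * Real.tanh u) 0) ((fun u => u * Real.tanh u) M) := by
    simp only [zero_mul, Set.mem_Icc]
    exact ⟨ht.le, hMt⟩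
  obtain ⟨u, hu, huv⟩ := this hmem
  refine ⟨u, ?_, huv⟩
  rcases eq_or_lt_of_le hu.1 with h | h
  · exfalso; rw [← h] at huv; simp at huv; linarith
  · exact h

open Classical in
noncomputable def myf (t : ℝ) : ℝ :=
  if h : ∃ u : ℝ, 0 < u ∧ u * Real.tanh u = t then Real.tanh h.choose / h.choose else 1

private lemma myf_zero : myf 0 = 1 := by
  rw [myf]; rw [dif_neg]
  rintro ⟨u, hu, huv⟩
  have := mul_pos hu (tanh_pos' hu)
  linarith

private lemma myf_eq {u : ℝ} (hu : 0 < u) : myf (u * Real.tanh u) = Real.tanh u / u := by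
  have hex : ∃ v : ℝ, 0 < v ∧ v * Real.tanh v = u * Real.tanh u := ⟨u, hu, rfl⟩
  rw [myf]; rw [dif_pos hex]
  obtain ⟨hv, hvu⟩ := hex.choose_spec
  have : hex.choose = u :=
    phi_strictMonoOn.injOn (Set.mem_Ici.2 hv.le) (Set.mem_Ici.2 hu.le) hvu
  rw [this]

/-- There is a unique function `f : [0,∞) → ℝ` with `f 0 = 1` and
`f (u * tanh u) = tanh u / u` for every `u > 0`; moreover `0 < f t ≤ 1` for every `t ≥ 0`.
(We model `f` as a function on `ℝ`, unique on `[0, ∞)`.) -/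
theorem exists_unique_f :
    ∃ f : ℝ → ℝ,
      (f 0 = 1 ∧ ∀ u : ℝ, 0 < u → f (u * Real.tanh u) = Real.tanh u / u) ∧
      (∀ t : ℝ, 0 ≤ t → 0 < f t ∧ f t ≤ 1) ∧
      (∀ g : ℝ → ℝ,
        (g 0 = 1 ∧ ∀ u : ℝ, 0 < u → g (u * Real.tanh u) = Real.tanh u / u) →
        ∀ t : ℝ, 0 ≤ t → g t = f t) := by
  refine ⟨myf, ⟨myf_zero, fun u hu => myf_eq hu⟩, ?_, ?_⟩
  · intro t ht
    rcases eq_or_lt_of_le ht with h | h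
    · rw [← h, myf_zero]; norm_num
    · obtain ⟨u, hu, huv⟩ := phi_surj h
      rw [← huv, myf_eq hu]
      constructor
      · exact div_pos (tanh_pos' hu) hu
      · rw [div_le_one hu]
        have h1 : Real.tanh u ≤ Real.sinh u := by
          rw [Real.tanh_eq_sinh_div_cosh]
          exact div_le_self (Real.sinh_pos_iff.2 hu).le (Real.one_le_cosh u)
        have h2 : u ≤ Real.sinh u := (Real.self_lt_sinh_iff.2 hu).le
        -- use cosh u ≥ 1 and sinh u / cosh u ≤ u ↔ sinh u ≤ u * cosh u
        have h3 : Real.sinh u ≤ u * Real.cosh u := sinh_le_mul_cosh hu.le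
        rw [Real.tanh_eq_sinh_div_cosh, div_le_iff₀ (Real.cosh_pos u)]
        exact h3
  · rintro g ⟨hg0, hg⟩ t ht
    rcases eq_or_lt_of_le ht with h | h
    · rw [← h, hg0, myf_zero]
    · obtain ⟨u, hu, huv⟩ := phi_surj h
      rw [← huv, hg u hu, myf_eq hu]
end

section
/- For every integer d ≥ 3, the function p ↦ 1/ε(p) is Lebesgue integrable on the cube (−π,π]^d ⊂ ℝ^d; equivalently, θ(d) = (2π)^{−d} ∫_{(−π,π]^d} (1/ε(p)) dp is finite. -/
open MeasureTheory

private lemma one_sub_cos_lower {x : ℝ} (hx : |x| ≤ Real.pi) :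
    2 / Real.pi ^ 2 * x ^ 2 ≤ 1 - Real.cos x := by
  have := Real.cos_le_one_sub_mul_cos_sq hx
  linarith

/-- For every integer `d ≥ 3`, the function `p ↦ 1/ε(p)`, with
`ε(p) = ∑ᵢ (1 - cos pᵢ)`, is Lebesgue integrable on the cube `(-π, π]^d ⊂ ℝ^d`. -/
theorem inv_eps_integrableOn (d : ℕ) (hd : 3 ≤ d) :
    IntegrableOn (fun p : Fin d → ℝ => (∑ i, (1 - Real.cos (p i)))⁻¹)
      (Set.univ.pi fun _ : Fin d => Set.Ioc (-Real.pi) Real.pi) volume := by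
  have pi_pos := Real.pi_pos
  set f : (Fin d → ℝ) → ℝ := fun p => (∑ i, (1 - Real.cos (p i)))⁻¹ with hf
  set S : Set (Fin d → ℝ) := Set.univ.pi fun _ : Fin d => Set.Ioc (-Real.pi) Real.pi with hS
  have hSm : MeasurableSet S := MeasurableSet.univ_pi fun _ => measurableSet_Ioc
  have hfnn : ∀ p, 0 ≤ f p := by
    intro p
    apply inv_nonneg.2
    exact Finset.sum_nonneg fun i _ => by nlinarith [Real.cos_le_one (p i)]
  have hcont : Continuous fun p : Fin d → ℝ => ∑ i, (1 - Real.cos (p i)) := by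
    apply continuous_finset_sum
    intro i _
    exact continuous_const.sub (Real.continuous_cos.comp (continuous_apply i))
  have hmeas : Measurable f := hcont.measurable.inv
  -- volume of the cube
  have hvolS : volume S = ENNReal.ofReal (2 * Real.pi) ^ d := by
    rw [hS, volume_pi_pi]
    simp [Real.volume_Ioc]
    congr 1
    rw [← two_mul, ENNReal.ofReal_mul (by norm_num), ENNReal.ofReal_ofNat]
  refine ⟨hmeas.aestronglyMeasurable, ?_⟩
  rw [hasFiniteIntegral_iff_ofReal (ae_of_all _ hfnn)]
  rw [lintegral_eq_lintegral_meas_lt _ (ae_of_all _ hfnn) hmeas.aemeasurable]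
  -- key sublevel set bound
  have key : ∀ t : ℝ, 0 < t →
      (volume.restrict S) {p | t < f p} ≤
        ENNReal.ofReal (2 * (Real.pi / Real.sqrt (2 * t))) ^ d := by
    intro t ht
    rw [Measure.restrict_apply' hSm]
    set r : ℝ := Real.pi / Real.sqrt (2 * t) with hr
    have hrpos : 0 < r := div_pos pi_pos (Real.sqrt_pos.2 (by linarith))
    have hsub : {p | t < f p} ∩ S ⊆ Set.univ.pi fun _ : Fin d => Set.Ioo (-r) r := by
      rintro p ⟨hp1, hp2⟩ i _
      have hpi : p i ∈ Set.Ioc (-Real.pi) Real.pi := hp2 i (Set.mem_univ i)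
      have habs : |p i| ≤ Real.pi := abs_le.2 ⟨hpi.1.le, hpi.2⟩
      have hlt : t < f p := hp1
      set e : ℝ := ∑ j, (1 - Real.cos (p j)) with he
      have he_nn : 0 ≤ e := Finset.sum_nonneg fun j _ => by nlinarith [Real.cos_le_one (p j)]
      have he_pos : 0 < e := by
        rcases he_nn.lt_or_eq with h | h
        · exact h
        · exfalso; rw [hf] at hlt; simp only [← he, ← h, inv_zero] at hlt; linarith
      have he_lt : e < t⁻¹ := by
        have : t < e⁻¹ := hlt
        calc e = (e⁻¹)⁻¹ := (inv_inv e).symm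
          _ < t⁻¹ := by
            apply inv_strictAnti₀ ht this
      have hterm : 2 / Real.pi ^ 2 * (p i) ^ 2 ≤ e := by
        refine le_trans (one_sub_cos_lower habs) ?_
        rw [he]
        exact Finset.single_le_sum (f := fun j => 1 - Real.cos (p j))
          (fun j _ => sub_nonneg.2 (Real.cos_le_one (p j))) (Finset.mem_univ i)
      have hsq : (p i) ^ 2 < r ^ 2 := by
        have h1 : 2 / Real.pi ^ 2 * (p i) ^ 2 < t⁻¹ := lt_of_le_of_lt hterm he_lt
        have hr2 : r ^ 2 = Real.pi ^ 2 / (2 * t) := by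
          rw [hr, div_pow, Real.sq_sqrt (by linarith)]
        rw [hr2]
        rw [lt_div_iff₀ (by linarith)]
        have hπ2 : (0:ℝ) < Real.pi ^ 2 := by positivity
        rw [div_mul_eq_mul_div, div_lt_iff₀ hπ2] at h1
        calc (p i) ^ 2 * (2 * t) = (2 * (p i) ^ 2) * t := by ring
          _ < t⁻¹ * Real.pi ^ 2 * t := by
            apply mul_lt_mul_of_pos_right _ ht
            linarith
          _ = Real.pi ^ 2 := by field_simp
      constructor
      · nlinarith
      · nlinarith
    calc volume ({p | t < f p} ∩ S)
        ≤ volume (Set.univ.pi fun _ : Fin d => Set.Ioo (-r) r) := measure_mono hsub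
      _ = ENNReal.ofReal (2 * r) ^ d := by
          rw [volume_pi_pi]
          simp [Real.volume_Ioo]
          congr 1
          rw [← two_mul, ENNReal.ofReal_mul (by norm_num), ENNReal.ofReal_ofNat]
  -- split the outer integral
  have hsplit : Set.Ioi (0:ℝ) = Set.Ioc 0 1 ∪ Set.Ioi 1 :=
    (Set.Ioc_union_Ioi_eq_Ioi zero_le_one).symm
  rw [hsplit, lintegral_union measurableSet_Ioi (Set.Ioc_disjoint_Ioi le_rfl)]
  have part1 : ∫⁻ t in Set.Ioc (0:ℝ) 1, (volume.restrict S) {p | t < f p} < ⊤ := by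
    have hb : ∀ t : ℝ, (volume.restrict S) {p | t < f p} ≤ ENNReal.ofReal (2 * Real.pi) ^ d := by
      intro t
      calc (volume.restrict S) {p | t < f p} ≤ (volume.restrict S) Set.univ :=
            measure_mono (Set.subset_univ _)
        _ = volume S := by rw [Measure.restrict_apply_univ]
        _ = ENNReal.ofReal (2 * Real.pi) ^ d := hvolS
    calc ∫⁻ t in Set.Ioc (0:ℝ) 1, (volume.restrict S) {p | t < f p}
        ≤ ∫⁻ _ in Set.Ioc (0:ℝ) 1, ENNReal.ofReal (2 * Real.pi) ^ d :=
          lintegral_mono fun t => hb t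
      _ = ENNReal.ofReal (2 * Real.pi) ^ d * volume (Set.Ioc (0:ℝ) 1) := by
          rw [setLIntegral_const]
      _ < ⊤ := by
          apply ENNReal.mul_lt_top
          · exact ENNReal.pow_lt_top ENNReal.ofReal_lt_top
          · simp [Real.volume_Ioc]
  have part2 : ∫⁻ t in Set.Ioi (1:ℝ), (volume.restrict S) {p | t < f p} < ⊤ := by
    set C : ℝ := (2 * Real.pi) ^ d with hC
    have hCpos : 0 < C := by positivity
    have hexp : -((d:ℝ)/2) < -1 := by
      have : (3:ℝ) ≤ (d:ℝ) := by exact_mod_cast hd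
      linarith
    have hint : IntegrableOn (fun t : ℝ => C * t ^ (-((d:ℝ)/2))) (Set.Ioi 1) volume :=
      (integrableOn_Ioi_rpow_of_lt hexp one_pos).const_mul C
    have hfin : ∫⁻ t in Set.Ioi (1:ℝ), ENNReal.ofReal (C * t ^ (-((d:ℝ)/2))) < ⊤ := by
      refine lt_of_le_of_lt (lintegral_mono fun t => ?_) hint.2
      exact Real.ofReal_le_enorm _
    refine lt_of_le_of_lt ?_ hfin
    refine setLIntegral_mono' measurableSet_Ioi fun t ht => ?_
    have ht1 : (1:ℝ) < t := ht
    have ht0 : (0:ℝ) < t := by linarith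
    refine le_trans (key t ht0) ?_
    -- (2 * (π / √(2t)))^d ≤ C * t^(-d/2)
    have hsqrt : Real.sqrt t ≤ Real.sqrt (2 * t) :=
      Real.sqrt_le_sqrt (by linarith)
    have hst : 0 < Real.sqrt t := Real.sqrt_pos.2 ht0
    have h1 : 2 * (Real.pi / Real.sqrt (2 * t)) ≤ 2 * Real.pi / Real.sqrt t := by
      rw [mul_div_assoc]
      apply mul_le_mul_of_nonneg_left _ (by norm_num : (0:ℝ) ≤ 2)
      apply div_le_div_of_nonneg_left pi_pos.le hst hsqrt
    have h2 : (2 * Real.pi / Real.sqrt t) ^ d = C * t ^ (-((d:ℝ)/2)) := by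
      rw [div_pow, hC, ← Real.rpow_natCast (Real.sqrt t) d, Real.sqrt_eq_rpow,
        ← Real.rpow_mul ht0.le, Real.rpow_neg ht0.le, ← div_eq_mul_inv]
      congr 2
      ring
    calc ENNReal.ofReal (2 * (Real.pi / Real.sqrt (2 * t))) ^ d
        = ENNReal.ofReal ((2 * (Real.pi / Real.sqrt (2 * t))) ^ d) := by
          rw [ENNReal.ofReal_pow (by positivity)]
      _ ≤ ENNReal.ofReal ((2 * Real.pi / Real.sqrt t) ^ d) := by
          apply ENNReal.ofReal_le_ofReal
          apply pow_le_pow_left₀ (by positivity) h1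
      _ = ENNReal.ofReal (C * t ^ (-((d:ℝ)/2))) := by rw [h2]
  exact ENNReal.add_lt_top.2 ⟨part1, part2⟩ |>.ne |> fun h => lt_of_le_of_ne le_top h
end

section
/- Let d ≥ 3 be an integer, ν, J > 0, and fix x, y ∈ ℤ^d. Then, as L → ∞, (2L)^{−d} Σ_{p ∈ Λ*_L, p ≠ 0} (ν/(2Jε(p)))·cos((p, x−y)) converges to (2π)^{−d} ∫_{(−π,π]^d} (ν/(2Jε(p)))·cos((p, x−y)) dp. -/
open MeasureTheory
open scoped Classical
open Real Filter Set
open scoped ENNReal NNReal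

namespace Brill

noncomputable def gam (L : ℕ) (t : ℝ) : ℝ :=
  -Real.pi + Real.pi * (⌈(L : ℝ) * (t + Real.pi) / Real.pi⌉ : ℤ) / L

noncomputable def eps (d : ℕ) (q : Fin d → ℝ) : ℝ := ∑ i, (1 - Real.cos (q i))

noncomputable def ff (d : ℕ) (ν J : ℝ) (c : Fin d → ℝ) (q : Fin d → ℝ) : ℝ :=
  ν / (2 * J * eps d q) * Real.cos (∑ i, q i * c i)

noncomputable def gvec (d L : ℕ) (p : Fin d → ℝ) : Fin d → ℝ := fun i => gam L (p i)

noncomputable def FL (d : ℕ) (ν J : ℝ) (c : Fin d → ℝ) (L : ℕ) (p : Fin d → ℝ) : ℝ :=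
  if gvec d L p = 0 then 0 else ff d ν J c (gvec d L p)

def box (d : ℕ) : Set (Fin d → ℝ) := Set.univ.pi fun _ => Set.Ioc (-Real.pi) Real.pi

def cell (d L : ℕ) (s : Fin d → Fin (2 * L)) : Set (Fin d → ℝ) :=
  Set.univ.pi fun i => Set.Ioc (-Real.pi + Real.pi * ((s i : ℕ) : ℝ) / L)
    (-Real.pi + Real.pi * (((s i : ℕ) : ℝ) + 1) / L)

noncomputable def grid (d L : ℕ) (s : Fin d → Fin (2 * L)) : Fin d → ℝ :=
  fun i => -Real.pi + Real.pi * (((s i : ℕ) : ℝ) + 1) / L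

lemma eps_measurable (d : ℕ) : Measurable (eps d) := by
  unfold eps; exact Finset.measurable_sum _ fun i _ =>
    (measurable_const.sub (Real.measurable_cos.comp (measurable_pi_apply i)))

lemma ff_measurable (d : ℕ) (ν J : ℝ) (c : Fin d → ℝ) : Measurable (ff d ν J c) := by
  unfold ff
  exact (measurable_const.div ((measurable_const.mul (eps_measurable d)))).mul
    (Real.measurable_cos.comp (Finset.measurable_sum _ fun i _ =>
      (measurable_pi_apply i).mul measurable_const))

lemma gam_measurable (L : ℕ) : Measurable (gam L) := by
  have h : Measurable fun t : ℝ => ((⌈(L : ℝ) * (t + Real.pi) / Real.pi⌉ : ℤ) : ℝ) :=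
    measurable_from_top.comp ((measurable_id.add_const _).const_mul _ |>.div_const _).ceil
  unfold gam
  exact measurable_const.add ((h.const_mul _).div_const _)

lemma gvec_measurable (d L : ℕ) : Measurable (gvec d L) :=
  measurable_pi_lambda _ fun i => (gam_measurable L).comp (measurable_pi_apply i)

lemma FL_measurable (d : ℕ) (ν J : ℝ) (c : Fin d → ℝ) (L : ℕ) :
    Measurable (FL d ν J c L) := by
  unfold FL
  exact Measurable.ite (gvec_measurable d L (measurableSet_singleton 0)) measurable_const
    ((ff_measurable d ν J c).comp (gvec_measurable d L))

lemma measurableSet_cell (d L : ℕ) (s : Fin d → Fin (2 * L)) : MeasurableSet (cell d L s) :=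
  MeasurableSet.univ_pi fun _ => measurableSet_Ioc

lemma measurableSet_box (d : ℕ) : MeasurableSet (box d) :=
  MeasurableSet.univ_pi fun _ => measurableSet_Ioc

lemma volume_cell {d L : ℕ} (hL : 1 ≤ L) (s : Fin d → Fin (2 * L)) :
    volume (cell d L s) = ENNReal.ofReal ((Real.pi / L) ^ d) := by
  have hL0 : (0:ℝ) < L := by exact_mod_cast hL
  unfold cell
  rw [volume_pi_pi]
  have he : ∀ i, (-Real.pi + Real.pi * (((s i : ℕ) : ℝ) + 1) / L)
      - (-Real.pi + Real.pi * ((s i : ℕ) : ℝ) / L) = Real.pi / L := by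
    intro i; field_simp; ring
  calc (∏ i, volume (Set.Ioc (-Real.pi + Real.pi * ((s i : ℕ) : ℝ) / L)
        (-Real.pi + Real.pi * (((s i : ℕ) : ℝ) + 1) / L)))
      = ∏ _i : Fin d, ENNReal.ofReal (Real.pi / L) := by
        refine Finset.prod_congr rfl fun i _ => ?_
        rw [Real.volume_Ioc, he i]
    _ = ENNReal.ofReal ((Real.pi / L) ^ d) := by
        rw [Finset.prod_const, ENNReal.ofReal_pow (by positivity), Finset.card_univ,
          Fintype.card_fin]

lemma gam_bounds {L : ℕ} (hL : 1 ≤ L) (t : ℝ) : t ≤ gam L t ∧ gam L t < t + Real.pi / L := by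
  have hπ := Real.pi_pos
  have hL0 : (0:ℝ) < L := by exact_mod_cast hL
  set u : ℝ := (L : ℝ) * (t + Real.pi) / Real.pi with hu
  have h1 : u ≤ ⌈u⌉ := Int.le_ceil u
  have h2 : (⌈u⌉ : ℝ) < u + 1 := Int.ceil_lt_add_one u
  have key : (L:ℝ) * (t + Real.pi) = Real.pi * u := by
    rw [hu]; field_simp
  unfold gam
  constructor
  · rw [← sub_nonneg]
    have e : -Real.pi + Real.pi * (⌈u⌉:ℝ) / L - t = (Real.pi * (⌈u⌉:ℝ) - Real.pi * u) / L := by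
      field_simp; linarith [key]
    rw [e]
    exact div_nonneg (by nlinarith) hL0.le
  · rw [← sub_neg]
    have e : -Real.pi + Real.pi * (⌈u⌉:ℝ) / L - (t + Real.pi / L)
        = (Real.pi * (⌈u⌉:ℝ) - Real.pi * u - Real.pi) / L := by
      field_simp; linarith [key]
    rw [e]
    exact div_neg_of_neg_of_pos (by nlinarith) hL0

/-- On the cell `(-π + π k/L, -π + π (k+1)/L]`, `gam` equals the right endpoint. -/
lemma gam_eq {L : ℕ} (hL : 1 ≤ L) {k : ℕ} {t : ℝ}
    (h1 : -Real.pi + Real.pi * k / L < t) (h2 : t ≤ -Real.pi + Real.pi * (k + 1) / L) :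
    gam L t = -Real.pi + Real.pi * (k + 1) / L := by
  have hπ := Real.pi_pos
  have hL0 : (0:ℝ) < L := by exact_mod_cast hL
  have hc : ⌈(L : ℝ) * (t + Real.pi) / Real.pi⌉ = (k : ℤ) + 1 := by
    have ha : Real.pi * k < (t + Real.pi) * L :=
      (div_lt_iff₀ hL0).mp (by linarith : Real.pi * k / L < t + Real.pi)
    have hb : (t + Real.pi) * L ≤ Real.pi * (k + 1) :=
      (le_div_iff₀ hL0).mp (by linarith : t + Real.pi ≤ Real.pi * (k + 1) / L)
    rw [Int.ceil_eq_iff]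
    constructor
    · push_cast
      rw [lt_div_iff₀ hπ]
      nlinarith
    · push_cast
      rw [div_le_iff₀ hπ]
      nlinarith
  unfold gam
  rw [hc]
  push_cast
  ring


end Brill

namespace Brill

lemma mem_cell_gvec {d L : ℕ} (hL : 1 ≤ L) {s : Fin d → Fin (2 * L)} {p : Fin d → ℝ}
    (hp : p ∈ cell d L s) : gvec d L p = grid d L s := by
  funext i
  have hi := hp i (Set.mem_univ i)
  exact gam_eq hL hi.1 hi.2

lemma ceil_mem {L : ℕ} (hL : 1 ≤ L) {t : ℝ} (ht : t ∈ Set.Ioc (-Real.pi) Real.pi) :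
    1 ≤ ⌈(L : ℝ) * (t + Real.pi) / Real.pi⌉ ∧ ⌈(L : ℝ) * (t + Real.pi) / Real.pi⌉ ≤ 2 * L := by
  have hπ := Real.pi_pos
  have hL0 : (0:ℝ) < L := by exact_mod_cast hL
  constructor
  · have : (0:ℝ) < (L : ℝ) * (t + Real.pi) / Real.pi := by
      apply div_pos _ hπ
      have := ht.1
      nlinarith
    exact Int.ceil_pos.mpr this
  · have : (L : ℝ) * (t + Real.pi) / Real.pi ≤ ((2 * L : ℤ) : ℝ) := by
      push_cast
      rw [div_le_iff₀ hπ]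
      nlinarith [ht.2]
    exact Int.ceil_le.mpr this

lemma exists_cell {d L : ℕ} (hL : 1 ≤ L) {p : Fin d → ℝ} (hp : p ∈ box d) :
    ∃ s : Fin d → Fin (2 * L), p ∈ cell d L s := by
  have hL0 : (0:ℝ) < L := by exact_mod_cast hL
  have hπ := Real.pi_pos
  have h2L : 0 < 2 * L := by omega
  refine ⟨fun i => ⟨(⌈(L : ℝ) * (p i + Real.pi) / Real.pi⌉ - 1).toNat, ?_⟩, ?_⟩
  · have := ceil_mem hL (hp i (Set.mem_univ i))
    omega
  · intro i _
    have hm := ceil_mem hL (hp i (Set.mem_univ i))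
    set m := ⌈(L : ℝ) * (p i + Real.pi) / Real.pi⌉ with hmdef
    have hcast : (((m - 1).toNat : ℕ) : ℝ) = (m : ℝ) - 1 := by
      have : ((m - 1).toNat : ℤ) = m - 1 := Int.toNat_of_nonneg (by omega)
      exact_mod_cast congrArg (fun z : ℤ => (z : ℝ)) this
    have hb := gam_bounds hL (p i)
    have hg : gam L (p i) = -Real.pi + Real.pi * (m : ℝ) / L := rfl
    constructor
    · simp only [show ((((⌈(L : ℝ) * (p i + Real.pi) / Real.pi⌉ - 1).toNat : ℕ) : ℝ)) = (m : ℝ) - 1 from hcast]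
      have := hb.2
      rw [hg] at this
      have e : -Real.pi + Real.pi * ((m:ℝ) - 1) / L = -Real.pi + Real.pi * (m:ℝ) / L - Real.pi / L := by
        field_simp; ring
      rw [e]
      linarith
    · simp only [show ((((⌈(L : ℝ) * (p i + Real.pi) / Real.pi⌉ - 1).toNat : ℕ) : ℝ)) = (m : ℝ) - 1 from hcast]
      have := hb.1
      rw [hg] at this
      have e : ((m:ℝ) - 1 + 1) = (m:ℝ) := by ring
      rw [e]
      linarith

lemma cell_subset_box {d L : ℕ} (hL : 1 ≤ L) (s : Fin d → Fin (2 * L)) :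
    cell d L s ⊆ box d := by
  have hL0 : (0:ℝ) < L := by exact_mod_cast hL
  have hπ := Real.pi_pos
  intro p hp i _
  have hi := hp i (Set.mem_univ i)
  have hk : ((s i : ℕ) : ℝ) ≤ 2 * L - 1 := by
    have := (s i).isLt
    have : ((s i : ℕ) : ℝ) ≤ ((2 * L - 1 : ℕ) : ℝ) := by exact_mod_cast Nat.le_pred_of_lt this
    push_cast [Nat.cast_sub (by omega : 1 ≤ 2 * L)] at this
    linarith
  constructor
  · have h0 : (0:ℝ) ≤ Real.pi * ((s i : ℕ) : ℝ) / L := by positivity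
    linarith [hi.1]
  · have : Real.pi * (((s i : ℕ) : ℝ) + 1) / L ≤ 2 * Real.pi := by
      rw [div_le_iff₀ hL0]
      nlinarith
    linarith [hi.2]

lemma box_eq_union {d L : ℕ} (hL : 1 ≤ L) :
    box d = ⋃ s : Fin d → Fin (2 * L), cell d L s := by
  ext p
  constructor
  · intro hp
    obtain ⟨s, hs⟩ := exists_cell hL hp
    exact Set.mem_iUnion.mpr ⟨s, hs⟩
  · intro hp
    obtain ⟨s, hs⟩ := Set.mem_iUnion.mp hp
    exact cell_subset_box hL s hs

lemma cell_disjoint {d L : ℕ} (hL : 1 ≤ L) {s t : Fin d → Fin (2 * L)} (hst : s ≠ t) :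
    Disjoint (cell d L s) (cell d L t) := by
  have hL0 : (0:ℝ) < L := by exact_mod_cast hL
  have hπ := Real.pi_pos
  rw [Set.disjoint_left]
  intro p hps hpt
  obtain ⟨i, hi⟩ : ∃ i, s i ≠ t i := by
    by_contra h
    push_neg at h
    exact hst (funext h)
  have h1 := hps i (Set.mem_univ i)
  have h2 := hpt i (Set.mem_univ i)
  have key : ∀ a b : ℕ, a < b →
      ¬(p i ≤ -Real.pi + Real.pi * ((a:ℝ) + 1) / L ∧ -Real.pi + Real.pi * (b:ℝ) / L < p i) := by
    intro a b hab ⟨ha, hb⟩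
    have : ((a:ℝ) + 1) ≤ (b:ℝ) := by exact_mod_cast hab
    have : Real.pi * ((a:ℝ) + 1) / L ≤ Real.pi * (b:ℝ) / L := by
      gcongr
    linarith
  rcases lt_or_gt_of_ne (fun h => hi (Fin.ext h) : (s i : ℕ) ≠ (t i : ℕ)) with h | h
  · exact key _ _ h ⟨h1.2, h2.1⟩
  · exact key _ _ h ⟨h2.2, h1.1⟩

end Brill

namespace Brill

lemma FL_eqOn_cell {d L : ℕ} (hL : 1 ≤ L) (ν J : ℝ) (c : Fin d → ℝ) (s : Fin d → Fin (2 * L)) :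
    Set.EqOn (FL d ν J c L)
      (fun _ => if grid d L s = 0 then 0 else ff d ν J c (grid d L s)) (cell d L s) := by
  intro p hp
  simp only [FL, mem_cell_gvec hL hp]

lemma integral_FL {d L : ℕ} (hL : 1 ≤ L) (ν J : ℝ) (c : Fin d → ℝ) :
    ∫ p in box d, FL d ν J c L p
      = (Real.pi / L) ^ d * ∑ s ∈ Finset.univ.filter
          (fun s : Fin d → Fin (2 * L) => grid d L s ≠ 0), ff d ν J c (grid d L s) := by
  classical
  have hL0 : (0:ℝ) < L := by exact_mod_cast hL
  have hvol : ∀ s : Fin d → Fin (2 * L), volume (cell d L s) < ⊤ := fun s => by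
    rw [volume_cell hL s]; exact ENNReal.ofReal_lt_top
  have hint : ∀ s : Fin d → Fin (2 * L), IntegrableOn (FL d ν J c L) (cell d L s) := fun s =>
    ((integrableOn_const_iff (C := (if grid d L s = 0 then 0 else ff d ν J c (grid d L s) : ℝ))).mpr (Or.inr (hvol s))).congr_fun (FL_eqOn_cell hL ν J c s).symm
      (measurableSet_cell d L s)
  have hunion : box d = ⋃ s ∈ (Finset.univ : Finset (Fin d → Fin (2 * L))), cell d L s := by
    rw [box_eq_union (d := d) hL]
    simp
  rw [hunion, integral_biUnion_finset Finset.univ (fun s _ => measurableSet_cell d L s)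
    (fun s _ t _ hst => cell_disjoint hL hst) (fun s _ => hint s)]
  have hval : ∀ s : Fin d → Fin (2 * L), ∫ p in cell d L s, FL d ν J c L p
      = (if grid d L s ≠ 0 then ff d ν J c (grid d L s) else 0) * (Real.pi / L) ^ d := by
    intro s
    rw [setIntegral_congr_fun (measurableSet_cell d L s) (FL_eqOn_cell hL ν J c s),
      setIntegral_const, measureReal_def, volume_cell hL s, ENNReal.toReal_ofReal (by positivity)]
    by_cases h : grid d L s = 0 <;> simp [h, mul_comm]
  rw [Finset.sum_congr rfl fun s _ => hval s, ← Finset.sum_mul, ← Finset.sum_filter]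
  ring

end Brill

namespace Brill

lemma volume_zero_singleton (d : ℕ) (hd : 1 ≤ d) : volume ({0} : Set (Fin d → ℝ)) = 0 := by
  have : ({0} : Set (Fin d → ℝ)) = Set.univ.pi fun _ : Fin d => ({0} : Set ℝ) := by
    ext p
    simp [funext_iff, Set.mem_pi]
  rw [this, volume_pi_pi]
  simp [Real.volume_singleton, Finset.prod_const,
    Fintype.card_fin, zero_pow (by omega : d ≠ 0)]

lemma sq_pos_of_ne_zero {d : ℕ} {p : Fin d → ℝ} (hp : p ≠ 0) : 0 < ∑ i, (p i) ^ 2 := by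
  obtain ⟨i, hi⟩ : ∃ i, p i ≠ 0 := by
    by_contra h
    push_neg at h
    exact hp (funext h)
  exact Finset.sum_pos' (fun j _ => sq_nonneg _) ⟨i, Finset.mem_univ i, by positivity⟩

lemma norm_sq_le_sq {d : ℕ} (hd : 1 ≤ d) (p : Fin d → ℝ) : ‖p‖ ^ 2 ≤ ∑ i, (p i) ^ 2 := by
  haveI : Nonempty (Fin d) := ⟨⟨0, by omega⟩⟩
  obtain ⟨i, hi⟩ := Finite.exists_max fun i => ‖p i‖
  have h1 : ‖p‖ ≤ ‖p i‖ := by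
    apply pi_norm_le_iff_of_nonneg (norm_nonneg _) |>.mpr
    exact fun j => hi j
  have h2 : ‖p i‖ ^ 2 ≤ ∑ j, (p j) ^ 2 := by
    rw [Real.norm_eq_abs, sq_abs]
    exact Finset.single_le_sum (fun j _ => sq_nonneg (p j)) (Finset.mem_univ i)
  nlinarith [norm_nonneg p, norm_nonneg (p i)]

lemma box_subset_ball {d : ℕ} {p : Fin d → ℝ} (hp : p ∈ box d) : ‖p‖ ≤ Real.pi := by
  apply pi_norm_le_iff_of_nonneg Real.pi_pos.le |>.mpr
  intro i
  have := hp i (Set.mem_univ i)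
  rw [Real.norm_eq_abs, abs_le]
  exact ⟨this.1.le, this.2⟩

lemma integrableOn_bound {d : ℕ} (hd : 3 ≤ d) (K : ℝ) (hK : 0 ≤ K) :
    IntegrableOn (fun p : Fin d → ℝ => K / ∑ i, (p i) ^ 2) (box d) := by
  have hπ := Real.pi_pos
  set f : (Fin d → ℝ) → ℝ := fun p => K / ∑ i, (p i) ^ 2 with hf
  have hmeas : Measurable f :=
    measurable_const.div (Finset.measurable_sum _ fun i _ => (measurable_pi_apply i).pow_const 2)
  refine ⟨hmeas.aestronglyMeasurable, ?_⟩
  set A : ℕ → Set (Fin d → ℝ) := fun n =>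
    {p | Real.pi / 2 ^ (n + 1) < ‖p‖ ∧ ‖p‖ ≤ Real.pi / 2 ^ n} with hA
  have hAmeas : ∀ n, MeasurableSet (A n) := fun n => by
    apply MeasurableSet.inter
    · exact measurableSet_lt measurable_const measurable_norm
    · exact measurableSet_le measurable_norm measurable_const
  have hcover : box d ⊆ {0} ∪ ⋃ n, A n := by
    intro p hp
    by_cases hp0 : p = 0
    · exact Or.inl hp0
    · refine Or.inr (Set.mem_iUnion.mpr ?_)
      have hnorm : 0 < ‖p‖ := norm_pos_iff.mpr hp0
      have hle : ‖p‖ ≤ Real.pi := box_subset_ball hp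
      have hex : ∃ n : ℕ, Real.pi / 2 ^ (n + 1) < ‖p‖ := by
        obtain ⟨n, hn⟩ := exists_pow_lt_of_lt_one (div_pos hnorm hπ) (by norm_num : (1:ℝ)/2 < 1)
        have hmul : Real.pi * (1 / 2 : ℝ) ^ n < ‖p‖ := by
          have := (lt_div_iff₀ hπ).mp hn
          linarith
        have e : Real.pi / 2 ^ (n + 1) = Real.pi * (1 / 2 : ℝ) ^ n / 2 := by
          rw [pow_succ, one_div, inv_pow]
          field_simp
        have hpos : 0 < Real.pi * (1 / 2 : ℝ) ^ n := by positivity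
        exact ⟨n, by rw [e]; linarith⟩
      refine ⟨Nat.find hex, Nat.find_spec hex, ?_⟩
      rcases Nat.eq_zero_or_pos (Nat.find hex) with h0 | h0
      · rw [h0]
        simpa using hle
      · have := Nat.find_min hex (Nat.lt_of_lt_of_le (Nat.sub_lt h0 one_pos) le_rfl)
        push_neg at this
        have e : Nat.find hex - 1 + 1 = Nat.find hex := by omega
        rwa [e] at this
  -- the per-annulus bound
  have hrank : Module.finrank ℝ (Fin d → ℝ) = d := by
    rw [Module.finrank_pi]
    exact Fintype.card_fin d
  set M : ℝ := 4 * K * Real.pi ^ (d - 2) with hM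
  have hM0 : 0 ≤ M := by positivity
  set B : ℝ≥0∞ := volume (Metric.ball (0 : Fin d → ℝ) 1) with hB
  have hterm : ∀ n : ℕ, ∫⁻ p in A n, ‖f p‖₊ ∂volume
      ≤ ENNReal.ofReal M * ENNReal.ofReal ((1 / 2 : ℝ) ^ n) * B := by
    intro n
    set Cn : ℝ := K * (2 ^ (n + 1) / Real.pi) ^ 2 with hCn
    have hCn0 : 0 ≤ Cn := by positivity
    have hfA : ∀ p ∈ A n, (‖f p‖₊ : ℝ≥0∞) ≤ ENNReal.ofReal Cn := by
      intro p hp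
      have h1 : Real.pi / 2 ^ (n + 1) < ‖p‖ := hp.1
      have hsq : (Real.pi / 2 ^ (n + 1)) ^ 2 < ∑ i, p i ^ 2 := by
        have h2 := norm_sq_le_sq (by omega : 1 ≤ d) p
        have h3 : (Real.pi / 2 ^ (n + 1)) ^ 2 < ‖p‖ ^ 2 :=
          pow_lt_pow_left₀ h1 (by positivity) (by norm_num)
        linarith
      have hd0 : (0:ℝ) < (Real.pi / 2 ^ (n + 1)) ^ 2 := by positivity
      have hfle : f p ≤ Cn := by
        rw [hf]
        calc K / ∑ i, p i ^ 2 ≤ K / (Real.pi / 2 ^ (n + 1)) ^ 2 := by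
              apply div_le_div_of_nonneg_left hK hd0 hsq.le
          _ = Cn := by
              rw [hCn]
              field_simp
      have hf0 : 0 ≤ f p := div_nonneg hK (Finset.sum_nonneg fun i _ => sq_nonneg _)
      calc (‖f p‖₊ : ℝ≥0∞) = ENNReal.ofReal (f p) := by
            rw [← ENNReal.ofReal_coe_nnreal, coe_nnnorm, Real.norm_eq_abs, abs_of_nonneg hf0]
        _ ≤ ENNReal.ofReal Cn := ENNReal.ofReal_le_ofReal hfle
    have hreal : Cn * (Real.pi / 2 ^ n) ^ d ≤ M * (1 / 2 : ℝ) ^ n := by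
      have key : ((2:ℝ) ^ n) ^ 2 / ((2:ℝ) ^ n) ^ d ≤ (1 / 2 : ℝ) ^ n := by
        rw [div_le_iff₀ (by positivity)]
        have e : ((1:ℝ) / 2) ^ n * ((2:ℝ) ^ n) ^ d = ((2:ℝ) ^ n) ^ d / 2 ^ n := by
          rw [one_div, inv_pow]
          ring
        rw [e, le_div_iff₀ (by positivity)]
        calc ((2:ℝ) ^ n) ^ 2 * 2 ^ n = 2 ^ (n * 2 + n) := by rw [← pow_mul, ← pow_add]
          _ ≤ 2 ^ (n * d) := by
              apply pow_le_pow_right₀ one_le_two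
              have := Nat.mul_le_mul_left n hd
              omega
          _ = ((2:ℝ) ^ n) ^ d := pow_mul 2 n d
      have eπ : Real.pi ^ d = Real.pi ^ (d - 2) * Real.pi ^ 2 := by
        rw [← pow_add]
        congr 1
        omega
      have e2 : Cn * (Real.pi / 2 ^ n) ^ d
          = M * (((2:ℝ) ^ n) ^ 2 / ((2:ℝ) ^ n) ^ d) := by
        rw [hCn, hM, div_pow, div_pow, eπ]
        have e3 : ((2:ℝ) ^ (n + 1)) ^ 2 = 4 * ((2:ℝ) ^ n) ^ 2 := by
          rw [pow_succ]
          ring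
        rw [e3]
        field_simp
      rw [e2]
      exact mul_le_mul_of_nonneg_left key hM0
    calc ∫⁻ p in A n, ‖f p‖₊ ∂volume ≤ ∫⁻ _ in A n, ENNReal.ofReal Cn ∂volume :=
          setLIntegral_mono' (hAmeas n) hfA
      _ = ENNReal.ofReal Cn * volume (A n) := setLIntegral_const _ _
      _ ≤ ENNReal.ofReal Cn * volume (Metric.closedBall (0 : Fin d → ℝ) (Real.pi / 2 ^ n)) := by
          apply mul_le_mul_right
          apply measure_mono
          intro p hp
          exact mem_closedBall_zero_iff.mpr hp.2
      _ = ENNReal.ofReal Cn * (ENNReal.ofReal ((Real.pi / 2 ^ n) ^ d) * B) := by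
          rw [Measure.addHaar_closedBall volume 0 (by positivity), hrank]
      _ = ENNReal.ofReal (Cn * (Real.pi / 2 ^ n) ^ d) * B := by
          rw [ENNReal.ofReal_mul hCn0, mul_assoc]
      _ ≤ ENNReal.ofReal (M * (1 / 2 : ℝ) ^ n) * B := by
          exact mul_le_mul_left (ENNReal.ofReal_le_ofReal hreal) B
      _ = ENNReal.ofReal M * ENNReal.ofReal ((1 / 2 : ℝ) ^ n) * B := by
          rw [ENNReal.ofReal_mul hM0]
  have hBlt : B < ⊤ := measure_ball_lt_top
  have hhalf : ENNReal.ofReal ((1:ℝ)/2) = 2⁻¹ := by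
    rw [ENNReal.ofReal_div_of_pos (by norm_num)]
    norm_num
  show (∫⁻ p in box d, ‖f p‖₊ ∂volume) < ⊤
  calc ∫⁻ p in box d, ‖f p‖₊ ∂volume
      ≤ ∫⁻ p in ({0} ∪ ⋃ n, A n), ‖f p‖₊ ∂volume := lintegral_mono_set hcover
    _ ≤ (∫⁻ p in ({0} : Set (Fin d → ℝ)), ‖f p‖₊ ∂volume) + ∫⁻ p in ⋃ n, A n, ‖f p‖₊ ∂volume :=
        lintegral_union_le _ _ _
    _ = ∫⁻ p in ⋃ n, A n, ‖f p‖₊ ∂volume := by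
        rw [setLIntegral_measure_zero _ _ (volume_zero_singleton d (by omega)), zero_add]
    _ ≤ ∑' n, ∫⁻ p in A n, ‖f p‖₊ ∂volume := lintegral_iUnion_le _ _
    _ ≤ ∑' n, ENNReal.ofReal M * ENNReal.ofReal ((1 / 2 : ℝ) ^ n) * B :=
        ENNReal.tsum_le_tsum hterm
    _ = ENNReal.ofReal M * B * ∑' n : ℕ, (2⁻¹ : ℝ≥0∞) ^ n := by
        rw [← ENNReal.tsum_mul_left]
        congr 1
        funext n
        rw [ENNReal.ofReal_pow (by norm_num), hhalf]
        ring
    _ = ENNReal.ofReal M * B * 2 := by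
        rw [ENNReal.tsum_geometric, ENNReal.one_sub_inv_two, inv_inv]
    _ < ⊤ := by
        apply ENNReal.mul_lt_top
        · exact ENNReal.mul_lt_top ENNReal.ofReal_lt_top hBlt
        · exact ENNReal.ofNat_lt_top

end Brill

namespace Brill

lemma one_sub_cos_ge {t : ℝ} (h : |t| ≤ Real.pi) : 2 * t ^ 2 / Real.pi ^ 2 ≤ 1 - Real.cos t := by
  have hπ := Real.pi_pos
  wlog ht : 0 ≤ t generalizing t
  · push_neg at ht
    have := this (t := -t) (by rwa [abs_neg]) (by linarith)
    simpa using this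
  · have habs : t ≤ Real.pi := (abs_le.mp h).2
    have hsin : t / Real.pi ≤ Real.sin (t / 2) := by
      have := Real.mul_le_sin (x := t / 2) (by linarith) (by linarith)
      calc t / Real.pi = 2 / Real.pi * (t / 2) := by field_simp
        _ ≤ Real.sin (t / 2) := this
    have hnn : 0 ≤ t / Real.pi := by positivity
    have hsq : (t / Real.pi) ^ 2 ≤ Real.sin (t / 2) ^ 2 := by
      apply pow_le_pow_left₀ hnn hsin
    have hid : Real.sin (t / 2) ^ 2 = 1 / 2 - Real.cos t / 2 := by
      have := Real.sin_sq_eq_half_sub (t / 2)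
      rwa [mul_div_cancel₀ t (by norm_num : (2:ℝ) ≠ 0)] at this
    rw [hid] at hsq
    have : (t / Real.pi) ^ 2 = t ^ 2 / Real.pi ^ 2 := by rw [div_pow]
    rw [this] at hsq
    have e : 2 * t ^ 2 / Real.pi ^ 2 = 2 * (t ^ 2 / Real.pi ^ 2) := by ring
    rw [e]
    linarith

lemma eps_ge {d : ℕ} {q : Fin d → ℝ} (hq : q ∈ box d) :
    2 / Real.pi ^ 2 * ∑ i, q i ^ 2 ≤ eps d q := by
  unfold eps
  rw [Finset.mul_sum]
  apply Finset.sum_le_sum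
  intro i _
  have hi := hq i (Set.mem_univ i)
  have : |q i| ≤ Real.pi := abs_le.mpr ⟨hi.1.le, hi.2⟩
  have := one_sub_cos_ge this
  calc 2 / Real.pi ^ 2 * q i ^ 2 = 2 * q i ^ 2 / Real.pi ^ 2 := by ring
    _ ≤ 1 - Real.cos (q i) := this

lemma eps_pos {d : ℕ} {q : Fin d → ℝ} (hq : q ∈ box d) (hq0 : q ≠ 0) : 0 < eps d q := by
  have h1 := eps_ge hq
  have h2 := sq_pos_of_ne_zero hq0
  have hπ := Real.pi_pos
  have : 0 < 2 / Real.pi ^ 2 * ∑ i, q i ^ 2 := by positivity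
  linarith

lemma gam_lower {L : ℕ} (hL : 1 ≤ L) {t : ℝ} (h : gam L t ≠ 0) : Real.pi / L ≤ |gam L t| := by
  have hπ := Real.pi_pos
  have hL0 : (0:ℝ) < L := by exact_mod_cast hL
  set m : ℤ := ⌈(L : ℝ) * (t + Real.pi) / Real.pi⌉ with hm
  have hg : gam L t = Real.pi * ((m : ℝ) - L) / L := by
    unfold gam
    field_simp
    ring
  have hmL : m ≠ (L : ℤ) := by
    intro hc
    apply h
    rw [hg, hc]
    simp
  have h1 : (1 : ℝ) ≤ |(m : ℝ) - (L : ℝ)| := by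
    have : (1 : ℤ) ≤ |m - (L : ℤ)| := Int.one_le_abs (by omega)
    calc (1:ℝ) = ((1:ℤ):ℝ) := by norm_num
      _ ≤ ((|m - (L:ℤ)| : ℤ) : ℝ) := by exact_mod_cast this
      _ = |(m : ℝ) - (L : ℝ)| := by push_cast; ring_nf
  rw [hg, abs_div, abs_mul, abs_of_pos hπ, abs_of_pos hL0]
  gcongr
  nlinarith

lemma gam_mem_box {L : ℕ} (hL : 1 ≤ L) {t : ℝ} (ht : t ∈ Set.Ioc (-Real.pi) Real.pi) :
    gam L t ∈ Set.Ioc (-Real.pi) Real.pi := by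
  have hπ := Real.pi_pos
  have hL0 : (0:ℝ) < L := by exact_mod_cast hL
  obtain ⟨h1, h2⟩ := ceil_mem hL ht
  set m : ℤ := ⌈(L : ℝ) * (t + Real.pi) / Real.pi⌉ with hm
  have hg : gam L t = -Real.pi + Real.pi * (m : ℝ) / L := rfl
  constructor
  · rw [hg]
    have : (1:ℝ) ≤ (m:ℝ) := by exact_mod_cast h1
    have : 0 < Real.pi * (m:ℝ) / L := by positivity
    linarith
  · rw [hg]
    have hm2 : (m:ℝ) ≤ 2 * L := by exact_mod_cast h2
    have : Real.pi * (m:ℝ) / L ≤ 2 * Real.pi := by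
      rw [div_le_iff₀ hL0]
      nlinarith
    linarith

lemma gvec_mem_box {d L : ℕ} (hL : 1 ≤ L) {p : Fin d → ℝ} (hp : p ∈ box d) :
    gvec d L p ∈ box d := fun i _ => gam_mem_box hL (hp i (Set.mem_univ i))

end Brill

namespace Brill

lemma FL_le_bound {d : ℕ} (hd : 3 ≤ d) {ν J : ℝ} (hν : 0 < ν) (hJ : 0 < J) (c : Fin d → ℝ)
    {L : ℕ} (hL : 1 ≤ L) {p : Fin d → ℝ} (hp : p ∈ box d) (hp0 : p ≠ 0) :
    |FL d ν J c L p| ≤ (ν * Real.pi ^ 2 * d / J) / ∑ i, p i ^ 2 := by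
  have hπ := Real.pi_pos
  have hL0 : (0:ℝ) < L := by exact_mod_cast hL
  have hd0 : (0:ℝ) < d := by exact_mod_cast (by omega : 0 < d)
  have hsqp := sq_pos_of_ne_zero hp0
  by_cases hg0 : gvec d L p = 0
  · rw [FL, if_pos hg0, abs_zero]
    positivity
  · rw [FL, if_neg hg0]
    set g := gvec d L p with hgdef
    have hgbox : g ∈ box d := gvec_mem_box hL hp
    have hdiff : ∀ i, (p i - g i) ^ 2 ≤ (Real.pi / L) ^ 2 := by
      intro i
      have hb := gam_bounds hL (p i)
      have h1 : p i ≤ g i := hb.1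
      have h2 : g i < p i + Real.pi / L := hb.2
      have h3 : (0:ℝ) < Real.pi / L := by positivity
      nlinarith
    have hsum : ∑ i, (p i - g i) ^ 2 ≤ d * (Real.pi / L) ^ 2 := by
      calc ∑ i, (p i - g i) ^ 2 ≤ ∑ _i : Fin d, (Real.pi / L) ^ 2 :=
            Finset.sum_le_sum fun i _ => hdiff i
        _ = d * (Real.pi / L) ^ 2 := by
            rw [Finset.sum_const, Finset.card_univ, Fintype.card_fin, nsmul_eq_mul]
    have hlow : (Real.pi / L) ^ 2 ≤ ∑ i, g i ^ 2 := by
      obtain ⟨i, hi⟩ : ∃ i, g i ≠ 0 := by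
        by_contra h
        push_neg at h
        exact hg0 (funext h)
      have h1 : Real.pi / L ≤ |g i| := gam_lower hL hi
      calc (Real.pi / L) ^ 2 ≤ |g i| ^ 2 := by
            apply pow_le_pow_left₀ (by positivity) h1
        _ = g i ^ 2 := sq_abs _
        _ ≤ ∑ j, g j ^ 2 :=
            Finset.single_le_sum (f := fun j => g j ^ 2) (fun j _ => sq_nonneg _)
              (Finset.mem_univ i)
    have hd3 : (3:ℝ) ≤ (d:ℝ) := by exact_mod_cast hd
    have hkey : ∑ i, p i ^ 2 ≤ 4 * d * ∑ i, g i ^ 2 := by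
      have h2ab : ∑ i, p i ^ 2 ≤ 2 * ∑ i, g i ^ 2 + 2 * ∑ i, (p i - g i) ^ 2 := by
        have h : ∀ i : Fin d, p i ^ 2 ≤ 2 * g i ^ 2 + 2 * (p i - g i) ^ 2 := by
          intro i
          nlinarith [sq_nonneg (g i - (p i - g i))]
        calc ∑ i, p i ^ 2 ≤ ∑ i, (2 * g i ^ 2 + 2 * (p i - g i) ^ 2) :=
              Finset.sum_le_sum fun i _ => h i
          _ = 2 * ∑ i, g i ^ 2 + 2 * ∑ i, (p i - g i) ^ 2 := by
              rw [Finset.sum_add_distrib, ← Finset.mul_sum, ← Finset.mul_sum]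
      have hgnn : (0:ℝ) ≤ ∑ i, g i ^ 2 := Finset.sum_nonneg fun i _ => sq_nonneg _
      by_cases hc : ∑ i, p i ^ 2 ≤ 4 * d * (Real.pi / L) ^ 2
      · calc ∑ i, p i ^ 2 ≤ 4 * d * (Real.pi / L) ^ 2 := hc
          _ ≤ 4 * d * ∑ i, g i ^ 2 := by
              nlinarith [mul_le_mul_of_nonneg_left hlow (by positivity : (0:ℝ) ≤ 4 * d)]
      · push_neg at hc
        nlinarith [mul_nonneg (by linarith : (0:ℝ) ≤ (d:ℝ) - 1) hgnn]
    have heps : (∑ i, p i ^ 2) / (2 * Real.pi ^ 2 * d) ≤ eps d g := by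
      have h1 := eps_ge hgbox
      have h2 : (∑ i, p i ^ 2) / (2 * Real.pi ^ 2 * d) ≤ 2 / Real.pi ^ 2 * ∑ i, g i ^ 2 := by
        rw [div_le_iff₀ (by positivity)]
        have e : 2 / Real.pi ^ 2 * (∑ i, g i ^ 2) * (2 * Real.pi ^ 2 * d)
            = 4 * d * ∑ i, g i ^ 2 := by
          field_simp
          ring
        rw [e]
        exact hkey
      linarith
    have hepspos : 0 < eps d g :=
      lt_of_lt_of_le (by positivity) heps
    have h1 : |ff d ν J c g| ≤ ν / (2 * J * eps d g) := by
      rw [ff, abs_mul]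
      have ha : |ν / (2 * J * eps d g)| = ν / (2 * J * eps d g) :=
        abs_of_pos (by positivity)
      rw [ha]
      calc ν / (2 * J * eps d g) * |Real.cos (∑ i, g i * c i)|
          ≤ ν / (2 * J * eps d g) * 1 :=
            mul_le_mul_of_nonneg_left (Real.abs_cos_le_one _) (by positivity)
        _ = ν / (2 * J * eps d g) := mul_one _
    calc |ff d ν J c g| ≤ ν / (2 * J * eps d g) := h1
      _ ≤ (ν * Real.pi ^ 2 * d / J) / ∑ i, p i ^ 2 := by
          rw [div_le_div_iff₀ (by positivity) hsqp]
          have := mul_le_mul_of_nonneg_left heps (le_of_lt (by positivity : (0:ℝ) < 2 * J * ν))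
          calc ν * ∑ i, p i ^ 2
              = (2 * J * ν) * ((∑ i, p i ^ 2) / (2 * Real.pi ^ 2 * d)) * (Real.pi ^ 2 * d / J) := by
                field_simp
            _ ≤ (2 * J * ν) * eps d g * (Real.pi ^ 2 * d / J) := by
                apply mul_le_mul_of_nonneg_right _ (by positivity)
                exact this
            _ = ν * Real.pi ^ 2 * d / J * (2 * J * eps d g) := by ring

lemma FL_tendsto {d : ℕ} {ν J : ℝ} (hν : 0 < ν) (hJ : 0 < J) (c : Fin d → ℝ)
    {p : Fin d → ℝ} (hp : p ∈ box d) (hp0 : p ≠ 0) :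
    Tendsto (fun L : ℕ => FL d ν J c L p) atTop (nhds (ff d ν J c p)) := by
  have hgt : Tendsto (fun L : ℕ => gvec d L p) atTop (nhds p) := by
    rw [tendsto_pi_nhds]
    intro i
    have hub : Tendsto (fun L : ℕ => p i + Real.pi / L) atTop (nhds (p i)) := by
      have h0 := tendsto_const_div_atTop_nhds_zero_nat Real.pi
      have := (tendsto_const_nhds (x := p i) (f := atTop (α := ℕ))).add h0
      simpa using this
    apply tendsto_of_tendsto_of_tendsto_of_le_of_le' tendsto_const_nhds hub
    · filter_upwards [eventually_ge_atTop 1] with L hL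
      exact (gam_bounds hL (p i)).1
    · filter_upwards [eventually_ge_atTop 1] with L hL
      exact (gam_bounds hL (p i)).2.le
  have hcont : ContinuousAt (ff d ν J c) p := by
    have hepsc : Continuous (eps d) :=
      continuous_finset_sum _ fun i _ =>
        continuous_const.sub (Real.continuous_cos.comp (continuous_apply i))
    have hne : 2 * J * eps d p ≠ 0 := by
      have := eps_pos hp hp0
      positivity
    exact (continuousAt_const.div (continuous_const.mul hepsc).continuousAt hne).mul
      (Real.continuous_cos.comp
        (continuous_finset_sum _ fun i _ => (continuous_apply i).mul continuous_const)).continuousAt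
  have hcomp : Tendsto (fun L : ℕ => ff d ν J c (gvec d L p)) atTop (nhds (ff d ν J c p)) :=
    hcont.tendsto.comp hgt
  apply hcomp.congr'
  filter_upwards [hgt.eventually_ne hp0] with L hg
  rw [FL, if_neg hg]

end Brill


/-- For `d ≥ 3`, `ν, J > 0` and fixed `x, y ∈ ℤ^d`, the Riemann sums
`(2L)^{-d} ∑_{p ∈ Λ*_L, p ≠ 0} (ν/(2 J ε(p))) cos((p, x-y))` over the Brillouin zone
`Λ*_L = {p : pᵢ = -π + π sᵢ/L, sᵢ ∈ {1,…,2L}}` converge, as `L → ∞`, to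
`(2π)^{-d} ∫_{(-π,π]^d} (ν/(2 J ε(p))) cos((p, x-y)) dp`. -/
theorem brillouin_sum_tendsto_integral (d : ℕ) (hd : 3 ≤ d) (ν J : ℝ)
    (hν : 0 < ν) (hJ : 0 < J) (x y : Fin d → ℤ) :
    Filter.Tendsto
      (fun L : ℕ => (2 * (L : ℝ))⁻¹ ^ d *
        ∑ s ∈ Finset.univ.filter
            (fun s : Fin d → Fin (2 * L) =>
              (fun i => -Real.pi + Real.pi * (((s i : ℕ) : ℝ) + 1) / L) ≠ (0 : Fin d → ℝ)),
          ν / (2 * J * ∑ i, (1 - Real.cos (-Real.pi + Real.pi * (((s i : ℕ) : ℝ) + 1) / L)))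
            * Real.cos (∑ i,
                (-Real.pi + Real.pi * (((s i : ℕ) : ℝ) + 1) / L) * ((x i : ℝ) - (y i : ℝ))))
      Filter.atTop
      (nhds ((2 * Real.pi)⁻¹ ^ d *
        ∫ p in Set.univ.pi fun _ : Fin d => Set.Ioc (-Real.pi) Real.pi,
          ν / (2 * J * ∑ i, (1 - Real.cos (p i))) *
            Real.cos (∑ i, p i * ((x i : ℝ) - (y i : ℝ))))) := by
  classical
  set c : Fin d → ℝ := fun i => (x i : ℝ) - (y i : ℝ) with hc
  have hπ := Real.pi_pos
  -- a.e. facts on the box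
  have hae0 : ∀ᵐ p ∂(volume.restrict (Brill.box d)), p ≠ (0 : Fin d → ℝ) := by
    apply ae_restrict_of_ae
    rw [ae_iff]
    have he : {p : Fin d → ℝ | ¬p ≠ 0} = {0} := by
      ext p
      simp
    rw [he]
    exact Brill.volume_zero_singleton d (by omega)
  have haebox : ∀ᵐ p ∂(volume.restrict (Brill.box d)), p ∈ Brill.box d :=
    ae_restrict_mem (Brill.measurableSet_box d)
  -- dominated convergence
  have hDCT : Filter.Tendsto (fun L : ℕ => ∫ p in Brill.box d, Brill.FL d ν J c L p)
      Filter.atTop (nhds (∫ p in Brill.box d, Brill.ff d ν J c p)) := by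
    apply MeasureTheory.tendsto_integral_filter_of_dominated_convergence
      (bound := fun p : Fin d → ℝ => (ν * Real.pi ^ 2 * d / J) / ∑ i, p i ^ 2)
    · filter_upwards with L
      exact (Brill.FL_measurable d ν J c L).aestronglyMeasurable
    · filter_upwards [Filter.eventually_ge_atTop 1] with L hL
      filter_upwards [hae0, haebox] with p hp0 hpbox
      rw [Real.norm_eq_abs]
      exact Brill.FL_le_bound hd hν hJ c hL hpbox hp0
    · exact Brill.integrableOn_bound hd _ (by positivity)
    · filter_upwards [hae0, haebox] with p hp0 hpbox
      exact Brill.FL_tendsto hν hJ c hpbox hp0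
  have hT := hDCT.const_mul ((2 * Real.pi)⁻¹ ^ d)
  apply hT.congr'
  filter_upwards [Filter.eventually_ge_atTop 1] with L hL
  have hL0 : (0:ℝ) < L := by exact_mod_cast hL
  rw [Brill.integral_FL hL ν J c]
  have hscal : (2 * Real.pi)⁻¹ ^ d * (Real.pi / L) ^ d = (2 * (L : ℝ))⁻¹ ^ d := by
    rw [← mul_pow]
    congr 1
    field_simp
  have hsum : ∑ s ∈ Finset.univ.filter
        (fun s : Fin d → Fin (2 * L) => Brill.grid d L s ≠ 0),
        Brill.ff d ν J c (Brill.grid d L s)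
      = ∑ s ∈ Finset.univ.filter
            (fun s : Fin d → Fin (2 * L) =>
              (fun i => -Real.pi + Real.pi * (((s i : ℕ) : ℝ) + 1) / L) ≠ (0 : Fin d → ℝ)),
          ν / (2 * J * ∑ i, (1 - Real.cos (-Real.pi + Real.pi * (((s i : ℕ) : ℝ) + 1) / L)))
            * Real.cos (∑ i,
                (-Real.pi + Real.pi * (((s i : ℕ) : ℝ) + 1) / L) * ((x i : ℝ) - (y i : ℝ))) := by
    apply Finset.sum_congr
    · apply Finset.filter_congr
      intro s _
      rfl
    · intro s _
      rfl
  rw [← mul_assoc, hscal, hsum]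
end
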